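/- For every real number α ≥ 1: 0 ≤ Σ_{n ∈ ℤ} exp(−α·n²) − 1 − 2·exp(−α) ≤ 3·exp(−4α). -/

import Mathlib

lemma stmt13_summable_nat (α : ℝ) (hα : 1 ≤ α) :
    Summable (fun n : ℕ => Real.exp (-α * (n : ℝ) ^ 2)) := by
  have hr : Real.exp (-α) < 1 := Real.exp_lt_one_iff.2 (by linarith)
  have hgeo : Summable (fun n : ℕ => Real.exp (-α) ^ n) :=
    summable_geometric_of_lt_one (Real.exp_pos _).le hr
  refine Summable.of_nonneg_of_le (fun n => (Real.exp_pos _).le) (fun n => ?_) hgeo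
  rw [← Real.exp_nat_mul]
  apply Real.exp_le_exp.2
  have h1 : (n : ℝ) ≤ (n : ℝ) ^ 2 := by
    have : n ≤ n ^ 2 := Nat.le_self_pow two_ne_zero n
    exact_mod_cast this
  nlinarith

theorem stmt13 (α : ℝ) (hα : 1 ≤ α) :
    0 ≤ (∑' n : ℤ, Real.exp (-α * (n : ℝ) ^ 2)) - 1 - 2 * Real.exp (-α)
    ∧ (∑' n : ℤ, Real.exp (-α * (n : ℝ) ^ 2)) - 1 - 2 * Real.exp (-α)
        ≤ 3 * Real.exp (-4 * α) := by
  have hα0 : (0:ℝ) < α := lt_of_lt_of_le one_pos hα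
  have hN := stmt13_summable_nat α hα
  have hN1 : Summable (fun n : ℕ => Real.exp (-α * ((n : ℝ) + 1) ^ 2)) := by
    have := (summable_nat_add_iff 1).2 hN
    convert this using 2 with n
    · rfl
    push_cast
    ring_nf
  have hN2 : Summable (fun n : ℕ => Real.exp (-α * ((n : ℝ) + 2) ^ 2)) := by
    have := (summable_nat_add_iff 2).2 hN
    convert this using 2 with n
    · rfl
    push_cast
    ring_nf
  -- split the integer sum
  have hNat : Summable (fun n : ℕ => Real.exp (-α * ((n : ℤ) : ℝ) ^ 2)) := by
    simpa only [Int.cast_natCast] using hN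
  have hNegf : (fun n : ℕ => Real.exp (-α * ((-(n + 1) : ℤ) : ℝ) ^ 2))
      = fun n : ℕ => Real.exp (-α * ((n : ℝ) + 1) ^ 2) := by
    funext n; push_cast; ring_nf
  have hNeg : Summable (fun n : ℕ => Real.exp (-α * ((-(n + 1) : ℤ) : ℝ) ^ 2)) := by
    rw [hNegf]; exact hN1
  have hsplit : (∑' n : ℤ, Real.exp (-α * (n : ℝ) ^ 2))
      = (∑' n : ℕ, Real.exp (-α * ((n : ℤ) : ℝ) ^ 2))
        + ∑' n : ℕ, Real.exp (-α * ((-(n + 1) : ℤ) : ℝ) ^ 2) :=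
    tsum_of_nat_of_neg_add_one hNat hNeg
  have e1 : (∑' n : ℕ, Real.exp (-α * ((n : ℤ) : ℝ) ^ 2))
      = ∑' n : ℕ, Real.exp (-α * (n : ℝ) ^ 2) := by
    refine tsum_congr fun n => ?_; push_cast; ring_nf
  have e2 : (∑' n : ℕ, Real.exp (-α * ((-(n + 1) : ℤ) : ℝ) ^ 2))
      = ∑' n : ℕ, Real.exp (-α * ((n : ℝ) + 1) ^ 2) := by rw [hNegf]
  have h1 : (∑' n : ℕ, Real.exp (-α * (n : ℝ) ^ 2))
      = 1 + ∑' n : ℕ, Real.exp (-α * ((n : ℝ) + 1) ^ 2) := by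
    rw [Summable.tsum_eq_zero_add hN]
    congr 1
    · norm_num
    · refine tsum_congr fun n => ?_; push_cast; ring_nf
  have h2 : (∑' n : ℕ, Real.exp (-α * ((n : ℝ) + 1) ^ 2))
      = Real.exp (-α) + ∑' n : ℕ, Real.exp (-α * ((n : ℝ) + 2) ^ 2) := by
    rw [Summable.tsum_eq_zero_add hN1]
    congr 1
    · norm_num
    · refine tsum_congr fun n => ?_; push_cast; ring_nf
  set T : ℝ := ∑' n : ℕ, Real.exp (-α * ((n : ℝ) + 2) ^ 2) with hT
  have htot : (∑' n : ℤ, Real.exp (-α * (n : ℝ) ^ 2)) = 1 + 2 * Real.exp (-α) + 2 * T := by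
    rw [hsplit, e1, e2, h1, h2]; ring
  have hT0 : 0 ≤ T := tsum_nonneg fun n => (Real.exp_pos _).le
  -- upper bound on T
  set e : ℝ := Real.exp (-4 * α) with he
  have he0 : 0 < e := Real.exp_pos _
  have he13 : e ≤ 1 / 3 := by
    have h4 : Real.exp (-4 * α) ≤ Real.exp (-4) := Real.exp_le_exp.2 (by linarith)
    have h5 : (5 : ℝ) ≤ Real.exp 4 := by
      have := Real.add_one_le_exp (4 : ℝ); linarith
    have : Real.exp (-4) ≤ 1 / 3 := by
      rw [Real.exp_neg]
      rw [inv_le_comm₀ (by positivity) (by norm_num)]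
      linarith
    linarith
  have he1 : e < 1 := by linarith
  have hgeo2 : Summable (fun n : ℕ => e * e ^ n) :=
    (summable_geometric_of_lt_one he0.le he1).mul_left e
  have hTle : T ≤ e * (1 - e)⁻¹ := by
    have hterm : ∀ n : ℕ, Real.exp (-α * ((n : ℝ) + 2) ^ 2) ≤ e * e ^ n := by
      intro n
      rw [he, ← Real.exp_nat_mul, ← Real.exp_add]
      apply Real.exp_le_exp.2
      have hn : (0:ℝ) ≤ (n : ℝ) := Nat.cast_nonneg n
      nlinarith [mul_nonneg hα0.le (sq_nonneg (n:ℝ))]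
    calc T ≤ ∑' n : ℕ, e * e ^ n := Summable.tsum_le_tsum hterm hN2 hgeo2
      _ = e * (1 - e)⁻¹ := by
          rw [tsum_mul_left, tsum_geometric_of_lt_one he0.le he1]
  constructor
  · rw [htot]; linarith
  · rw [htot]
    have h1e : (0:ℝ) < 1 - e := by linarith
    have hx : (1 - e) * (1 - e)⁻¹ = 1 := mul_inv_cancel₀ (ne_of_gt h1e)
    have hxpos : (0:ℝ) < (1 - e)⁻¹ := inv_pos.2 h1e
    have hfinal : 2 * (e * (1 - e)⁻¹) ≤ 3 * e := by nlinarith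
    linarith
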